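/- arXiv:2110.13477 — 5 statements merged into one kernel-verified Lean document; each statement's English description precedes it below -/
import Mathlib

section
/- For any vector f = (f₁,…,f_d) ∈ ℝ^d with Σ_{i=1}^d f_i < 0, writing f_i⁻ := min(f_i, 0), the integral I(L) := ∫_{ℝ^d} 1{∃ t ∈ [0,L] : x_i < f_i·t for all i} · exp(Σ_{i=1}^d x_i) dx converges, as L → ∞, to (Σ_{i=1}^d f_i⁻)/(Σ_{i=1}^d f_i). -/
open MeasureTheory Set Filter

section Stmt9Aux

/-- The measure on `ℝ^d` with density `exp (∑ xᵢ)`. -/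
noncomputable def nuM (d : ℕ) : Measure (Fin d → ℝ) :=
  (volume : Measure (Fin d → ℝ)).withDensity fun x => ENNReal.ofReal (Real.exp (∑ i, x i))

lemma indicator_pi_prod {d : ℕ} (a : Fin d → ℝ) (x : Fin d → ℝ) :
    (Set.pi univ fun i => Iio (a i)).indicator (fun x : Fin d → ℝ => ∏ i, Real.exp (x i)) x
      = ∏ i, (Iio (a i)).indicator Real.exp (x i) := by
  by_cases hx : x ∈ Set.pi univ fun i => Iio (a i)
  · rw [Set.indicator_of_mem hx]
    exact Finset.prod_congr rfl fun i _ =>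
      (Set.indicator_of_mem (hx i (Set.mem_univ i)) _).symm
  · rw [Set.indicator_of_notMem hx]
    rw [Set.mem_pi] at hx
    push_neg at hx
    obtain ⟨i, -, hi⟩ := hx
    exact (Finset.prod_eq_zero (Finset.mem_univ i)
      (Set.indicator_of_notMem hi _)).symm

lemma integral_exp_Iio' (b : ℝ) : ∫ x : ℝ in Iio b, Real.exp x = Real.exp b := by
  rw [setIntegral_congr_set Iio_ae_eq_Iic, integral_exp_Iic]

lemma integrableOn_exp_Iio' (b : ℝ) : IntegrableOn Real.exp (Iio b) :=
  (integrableOn_exp_Iic b).mono_set Iio_subset_Iic_self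

lemma integrableOn_exp_pi (d : ℕ) (a : Fin d → ℝ) :
    IntegrableOn (fun x : Fin d → ℝ => Real.exp (∑ i, x i))
      (Set.pi univ fun i => Iio (a i)) := by
  have hS : MeasurableSet (Set.pi univ fun i : Fin d => Iio (a i)) :=
    MeasurableSet.univ_pi fun i => measurableSet_Iio
  rw [← integrable_indicator_iff hS]
  have : (Set.pi univ fun i : Fin d => Iio (a i)).indicator
      (fun x : Fin d → ℝ => Real.exp (∑ i, x i))
      = fun x => ∏ i, (Iio (a i)).indicator Real.exp (x i) := by
    funext x
    rw [show (fun x : Fin d → ℝ => Real.exp (∑ i, x i))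
        = fun x : Fin d → ℝ => ∏ i, Real.exp (x i) by funext y; rw [Real.exp_sum]]
    exact indicator_pi_prod a x
  rw [this]
  exact Integrable.fintype_prod (𝕜 := ℝ) fun i =>
    (integrable_indicator_iff measurableSet_Iio).2 (integrableOn_exp_Iio' (a i))

lemma setIntegral_exp_pi (d : ℕ) (a : Fin d → ℝ) :
    ∫ x : Fin d → ℝ in Set.pi univ fun i => Iio (a i), Real.exp (∑ i, x i)
      = Real.exp (∑ i, a i) := by
  have hS : MeasurableSet (Set.pi univ fun i : Fin d => Iio (a i)) :=
    MeasurableSet.univ_pi fun i => measurableSet_Iio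
  rw [← integral_indicator hS]
  have : ∀ x, (Set.pi univ fun i : Fin d => Iio (a i)).indicator
      (fun x : Fin d → ℝ => Real.exp (∑ i, x i)) x
      = ∏ i, (Iio (a i)).indicator Real.exp (x i) := by
    intro x
    rw [show (fun x : Fin d → ℝ => Real.exp (∑ i, x i))
        = fun x : Fin d → ℝ => ∏ i, Real.exp (x i) by funext y; rw [Real.exp_sum]]
    exact indicator_pi_prod a x
  simp_rw [this]
  rw [MeasureTheory.integral_fintype_prod_volume_eq_prod (𝕜 := ℝ)
    (f := fun i : Fin d => (Iio (a i)).indicator Real.exp), Real.exp_sum]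
  exact Finset.prod_congr rfl fun i _ => by
    rw [integral_indicator measurableSet_Iio, integral_exp_Iio']

lemma nuM_pi (d : ℕ) (a : Fin d → ℝ) :
    nuM d (Set.pi univ fun i => Iio (a i)) = ENNReal.ofReal (Real.exp (∑ i, a i)) := by
  have hS : MeasurableSet (Set.pi univ fun i : Fin d => Iio (a i)) :=
    MeasurableSet.univ_pi fun i => measurableSet_Iio
  rw [nuM, withDensity_apply _ hS,
    ← MeasureTheory.ofReal_integral_eq_lintegral_ofReal (integrableOn_exp_pi d a)
      (Filter.Eventually.of_forall fun x => (Real.exp_pos _).le),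
    setIntegral_exp_pi]

variable {d : ℕ} (f : Fin d → ℝ)

/-- The product ray `{x | ∀ i, xᵢ < fᵢ t}`. -/
def Ray (f : Fin d → ℝ) (t : ℝ) : Set (Fin d → ℝ) := {x | ∀ i, x i < f i * t}

lemma ray_eq_pi (t : ℝ) : Ray f t = Set.pi univ fun i => Iio (f i * t) := by
  ext x; simp [Ray]

lemma measurableSet_ray (t : ℝ) : MeasurableSet (Ray f t) := by
  rw [ray_eq_pi]
  exact MeasurableSet.univ_pi fun i => measurableSet_Iio

lemma nuM_ray (t : ℝ) : nuM d (Ray f t) = ENNReal.ofReal (Real.exp ((∑ i, f i) * t)) := by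
  rw [ray_eq_pi, nuM_pi]
  rw [← Finset.sum_mul]

lemma ray_inter_eq_pi (a b : ℝ) :
    Ray f a ∩ Ray f b = Set.pi univ fun i => Iio (min (f i * a) (f i * b)) := by
  ext x; simp [Ray, forall_and]

lemma nuM_ray_inter {h : ℝ} (hh : 0 ≤ h) (k : ℕ) :
    nuM d (Ray f (k * h) ∩ Ray f ((k + 1 : ℕ) * h))
      = ENNReal.ofReal (Real.exp ((∑ i, f i) * ((k + 1 : ℕ) * h) - (∑ i, max (f i) 0) * h)) := by
  rw [ray_inter_eq_pi, nuM_pi]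
  congr 1
  congr 1
  have : ∀ i, min (f i * (k * h)) (f i * ((k + 1 : ℕ) * h))
      = f i * ((k + 1 : ℕ) * h) - max (f i) 0 * h := by
    intro i
    rcases le_total 0 (f i) with hfi | hfi
    · rw [min_eq_left, max_eq_left hfi]
      · push_cast; ring
      · apply mul_le_mul_of_nonneg_left _ hfi
        apply mul_le_mul_of_nonneg_right _ hh
        push_cast; linarith
    · rw [min_eq_right, max_eq_right hfi]
      · push_cast; ring
      · apply mul_le_mul_of_nonpos_left _ hfi
        apply mul_le_mul_of_nonneg_right _ hh
        push_cast; linarith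
  rw [Finset.sum_congr rfl fun i _ => this i, Finset.sum_sub_distrib,
    ← Finset.sum_mul, ← Finset.sum_mul]

lemma ray_chain {h : ℝ} (hh : 0 ≤ h) {k K : ℕ} (hk : k ≤ K) :
    Ray f (k * h) ∩ Ray f ((K + 1 : ℕ) * h) ⊆ Ray f (K * h) := by
  rintro x ⟨h1, h2⟩ i
  rcases le_total 0 (f i) with hfi | hfi
  · calc x i < f i * (k * h) := h1 i
    _ ≤ f i * (K * h) := by
        apply mul_le_mul_of_nonneg_left _ hfi
        apply mul_le_mul_of_nonneg_right _ hh
        exact_mod_cast hk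
  · calc x i < f i * ((K + 1 : ℕ) * h) := h2 i
    _ ≤ f i * (K * h) := by
        apply mul_le_mul_of_nonpos_left _ hfi
        apply mul_le_mul_of_nonneg_right _ hh
        push_cast; linarith

/-- The explicit value of the measure of the union of the first `K+1` rays. -/
noncomputable def gG (f : Fin d → ℝ) (h : ℝ) (K : ℕ) : ℝ :=
  1 + ∑ k ∈ Finset.range K, (Real.exp ((∑ i, f i) * ((k + 1 : ℕ) * h))
      - Real.exp ((∑ i, f i) * ((k + 1 : ℕ) * h) - (∑ i, max (f i) 0) * h))

lemma c_nonneg : 0 ≤ ∑ i, max (f i) 0 :=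
  Finset.sum_nonneg fun i _ => le_max_right _ _

lemma gG_term_nonneg {h : ℝ} (hh : 0 ≤ h) (k : ℕ) :
    0 ≤ Real.exp ((∑ i, f i) * ((k + 1 : ℕ) * h))
      - Real.exp ((∑ i, f i) * ((k + 1 : ℕ) * h) - (∑ i, max (f i) 0) * h) := by
  have : (0:ℝ) ≤ (∑ i, max (f i) 0) * h := mul_nonneg (c_nonneg f) hh
  have := Real.exp_le_exp.2 (by linarith :
    (∑ i, f i) * ((k + 1 : ℕ) * h) - (∑ i, max (f i) 0) * h ≤ (∑ i, f i) * ((k + 1 : ℕ) * h))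
  linarith

lemma gG_nonneg {h : ℝ} (hh : 0 ≤ h) (K : ℕ) : 0 ≤ gG f h K := by
  have : 0 ≤ ∑ k ∈ Finset.range K, (Real.exp ((∑ i, f i) * ((k + 1 : ℕ) * h))
      - Real.exp ((∑ i, f i) * ((k + 1 : ℕ) * h) - (∑ i, max (f i) 0) * h)) :=
    Finset.sum_nonneg fun k _ => gG_term_nonneg f hh k
  unfold gG; linarith

lemma nuM_union_formula {h : ℝ} (hh : 0 ≤ h) (K : ℕ) :
    nuM d (⋃ k ∈ Finset.range (K + 1), Ray f (k * h)) = ENNReal.ofReal (gG f h K) := by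
  induction K with
  | zero =>
      rw [Finset.range_one, Finset.set_biUnion_singleton]
      rw [nuM_ray]
      norm_num [gG]
  | succ K ih =>
      have hU : (⋃ k ∈ Finset.range (K + 1 + 1), Ray f (k * h))
          = Ray f ((K + 1 : ℕ) * h) ∪ ⋃ k ∈ Finset.range (K + 1), Ray f (k * h) := by
        rw [Finset.range_add_one, Finset.set_biUnion_insert]
      have hVmeas : MeasurableSet (⋃ k ∈ Finset.range (K + 1), Ray f (k * h)) :=
        MeasurableSet.biUnion (Finset.range (K+1)).countable_toSet
          fun k _ => measurableSet_ray f _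
      have hInter : Ray f ((K + 1 : ℕ) * h) ∩ (⋃ k ∈ Finset.range (K + 1), Ray f (k * h))
          = Ray f (K * h) ∩ Ray f ((K + 1 : ℕ) * h) := by
        apply Set.Subset.antisymm
        · rintro x ⟨hxA, hxV⟩
          simp only [Set.mem_iUnion, Finset.mem_coe, Finset.mem_range] at hxV
          obtain ⟨k, hk, hxk⟩ := hxV
          exact ⟨ray_chain f hh (Nat.lt_succ_iff.1 hk) ⟨hxk, hxA⟩, hxA⟩
        · rintro x ⟨hxK, hxA⟩
          exact ⟨hxA, Set.mem_biUnion (Finset.mem_coe.mpr (Finset.self_mem_range_succ K)) hxK⟩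
      have key := measure_union_add_inter (μ := nuM d) (Ray f ((K + 1 : ℕ) * h)) hVmeas
      rw [hInter, nuM_ray_inter f hh, nuM_ray, ih] at key
      rw [hU]
      set s := ∑ i, f i
      set c := ∑ i, max (f i) 0
      set E := Real.exp (s * ((K + 1 : ℕ) * h))
      set I := Real.exp (s * ((K + 1 : ℕ) * h) - c * h)
      have hEI : 0 ≤ E - I := gG_term_nonneg f hh K
      have hG : 0 ≤ gG f h K := gG_nonneg f hh K
      have hnew : gG f h (K + 1) = gG f h K + (E - I) := by
        unfold gG
        rw [Finset.sum_range_succ]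
        ring
      have h2 : ENNReal.ofReal (gG f h (K+1)) + ENNReal.ofReal I
          = ENNReal.ofReal E + ENNReal.ofReal (gG f h K) := by
        rw [hnew, ← ENNReal.ofReal_add (by linarith) (Real.exp_nonneg _),
          ← ENNReal.ofReal_add (Real.exp_nonneg _) hG]
        congr 1
        ring
      rw [← h2] at key
      exact (ENNReal.add_left_inj (by exact ENNReal.ofReal_ne_top)).1 key

/-- The dyadic approximations of `S_L`. -/
noncomputable def UU (f : Fin d → ℝ) (L : ℝ) (m : ℕ) : Set (Fin d → ℝ) :=
  ⋃ k ∈ Finset.range (2 ^ m + 1), Ray f (k * (L / 2 ^ m))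

lemma measurableSet_UU (L : ℝ) (m : ℕ) : MeasurableSet (UU f L m) :=
  MeasurableSet.biUnion (Finset.range (2 ^ m + 1)).countable_toSet
    fun k _ => measurableSet_ray f _

lemma UU_mono {L : ℝ} : Monotone (UU f L) := by
  apply monotone_nat_of_le_succ
  intro m x hx
  simp only [UU, Set.mem_iUnion, Finset.mem_coe, Finset.mem_range] at hx ⊢
  obtain ⟨k, hk, hxk⟩ := hx
  refine ⟨2 * k, by omega, ?_⟩
  have : ((2 * k : ℕ) : ℝ) * (L / 2 ^ (m + 1)) = (k : ℝ) * (L / 2 ^ m) := by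
    push_cast [pow_succ]
    field_simp
  rw [this]
  exact hxk

lemma iUnion_UU {L : ℝ} (hL : 0 < L) :
    (⋃ m, UU f L m) = {x : Fin d → ℝ | ∃ t ∈ Icc (0 : ℝ) L, ∀ i, x i < f i * t} := by
  apply Set.Subset.antisymm
  · rintro x hx
    simp only [Set.mem_iUnion] at hx
    obtain ⟨m, hx⟩ := hx
    simp only [UU, Set.mem_iUnion, Finset.mem_coe, Finset.mem_range] at hx
    obtain ⟨k, hk, hxk⟩ := hx
    refine ⟨(k : ℝ) * (L / 2 ^ m), ⟨by positivity, ?_⟩, hxk⟩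
    have hk' : (k : ℝ) ≤ 2 ^ m := by
      have : (k : ℝ) ≤ ((2 ^ m : ℕ) : ℝ) := by exact_mod_cast Nat.lt_succ_iff.1 hk
      simpa using this
    calc (k : ℝ) * (L / 2 ^ m) ≤ 2 ^ m * (L / 2 ^ m) :=
          mul_le_mul_of_nonneg_right hk' (by positivity)
      _ = L := by field_simp
  · rintro x ⟨t, ⟨ht0, htL⟩, hxt⟩
    have hO : IsOpen {u : ℝ | ∀ i, x i < f i * u} := by
      rw [Set.setOf_forall]
      exact isOpen_iInter_of_finite fun i =>
        isOpen_lt continuous_const (continuous_const.mul continuous_id)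
    obtain ⟨ε, hε, hball⟩ := Metric.isOpen_iff.1 hO t hxt
    obtain ⟨m, hm⟩ := pow_unbounded_of_one_lt (L / ε) (one_lt_two (α := ℝ))
    have h2m : (0:ℝ) < 2 ^ m := by positivity
    have hsmall : L / 2 ^ m < ε := by
      rw [div_lt_iff₀ h2m]
      rw [div_lt_iff₀ hε] at hm
      linarith [hm]
    set k := ⌊t * 2 ^ m / L⌋₊ with hkdef
    have hk_le : k ≤ 2 ^ m := by
      have h1 : t * 2 ^ m / L ≤ ((2 ^ m : ℕ) : ℝ) := by
        push_cast
        rw [div_le_iff₀ hL]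
        nlinarith
      have h2 := Nat.floor_le_floor (R := ℝ) h1
      rwa [Nat.floor_natCast] at h2
    have hfl : (k : ℝ) ≤ t * 2 ^ m / L := Nat.floor_le (by positivity)
    have hfl' : t * 2 ^ m / L < (k : ℝ) + 1 := Nat.lt_floor_add_one _
    set u := (k : ℝ) * (L / 2 ^ m) with hudef
    have hu_le : u ≤ t := by
      have := mul_le_mul_of_nonneg_right hfl (le_of_lt (by positivity : (0:ℝ) < L / 2 ^ m))
      calc u ≤ t * 2 ^ m / L * (L / 2 ^ m) := this
        _ = t := by field_simp
    have hu_gt : t - L / 2 ^ m < u := by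
      have := mul_lt_mul_of_pos_right hfl' (by positivity : (0:ℝ) < L / 2 ^ m)
      have heq : t * 2 ^ m / L * (L / 2 ^ m) = t := by field_simp
      have hexp : ((k : ℝ) + 1) * (L / 2 ^ m) = u + L / 2 ^ m := by ring
      nlinarith [this]
    have hu_mem : u ∈ Metric.ball t ε := by
      rw [Real.ball_eq_Ioo]
      constructor <;> [linarith; linarith]
    refine Set.mem_iUnion.2 ⟨m, ?_⟩
    simp only [UU, Set.mem_iUnion, Finset.mem_coe, Finset.mem_range]
    exact ⟨k, by omega, hball hu_mem⟩

lemma gG_closed {h : ℝ} (hs : (∑ i, f i) < 0) (hh : 0 < h) (K : ℕ) :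
    gG f h K = 1 + (1 - Real.exp (-((∑ i, max (f i) 0) * h))) / (Real.exp ((∑ i, f i) * h) - 1)
      * Real.exp ((∑ i, f i) * h) * (Real.exp ((∑ i, f i) * (K * h)) - 1) := by
  set s := ∑ i, f i
  set c := ∑ i, max (f i) 0
  have hr1 : Real.exp (s * h) < 1 := Real.exp_lt_one_iff.2 (by nlinarith)
  set r := Real.exp (s * h) with hrdef
  have hrne : r ≠ 1 := ne_of_lt hr1
  have hterm : ∀ k : ℕ, Real.exp (s * ((k + 1 : ℕ) * h)) - Real.exp (s * ((k + 1 : ℕ) * h) - c * h)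
      = (1 - Real.exp (-(c * h))) * r ^ (k + 1) := by
    intro k
    have h1 : Real.exp (s * ((k + 1 : ℕ) * h)) = r ^ (k + 1) := by
      rw [hrdef, ← Real.exp_nat_mul]
      congr 1
      push_cast
      ring
    have h2 : Real.exp (s * ((k + 1 : ℕ) * h) - c * h)
        = r ^ (k + 1) * Real.exp (-(c * h)) := by
      rw [sub_eq_add_neg, Real.exp_add, h1]
    rw [h1, h2]
    ring
  unfold gG
  rw [Finset.sum_congr rfl fun k _ => hterm k, ← Finset.mul_sum]
  have hgeom : ∑ k ∈ Finset.range K, r ^ (k + 1) = r * ((r ^ K - 1) / (r - 1)) := by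
    simp_rw [pow_succ']
    rw [← Finset.mul_sum, geom_sum_eq hrne]
  rw [hgeom]
  have hrK : r ^ K = Real.exp (s * (K * h)) := by
    rw [hrdef, ← Real.exp_nat_mul]
    congr 1
    ring
  rw [hrK]
  have hden : r - 1 ≠ 0 := by intro hc; apply hrne; linarith
  field_simp

lemma tendsto_Q (hs : (∑ i, f i) < 0) :
    Tendsto (fun h : ℝ => (1 - Real.exp (-((∑ i, max (f i) 0) * h)))
        / (Real.exp ((∑ i, f i) * h) - 1)) (nhdsWithin 0 {(0:ℝ)}ᶜ)
      (nhds ((∑ i, max (f i) 0) / (∑ i, f i))) := by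
  set s := ∑ i, f i
  set c := ∑ i, max (f i) 0
  have hφ : HasDerivAt (fun u : ℝ => -Real.exp (-(c * u))) c 0 := by
    have h1 : HasDerivAt (fun u : ℝ => -(c * u)) (-c) 0 := by
      simpa using ((hasDerivAt_id (0:ℝ)).const_mul c).fun_neg
    have h2 := h1.exp
    simpa using h2.fun_neg
  have hψ : HasDerivAt (fun u : ℝ => Real.exp (s * u)) s 0 := by
    have h1 : HasDerivAt (fun u : ℝ => s * u) s 0 := by
      simpa using (hasDerivAt_id (0:ℝ)).const_mul s
    simpa using h1.exp
  rw [hasDerivAt_iff_tendsto_slope] at hφ hψ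
  have hdiv := hφ.div hψ (ne_of_lt hs)
  apply hdiv.congr'
  filter_upwards [self_mem_nhdsWithin] with h hh
  have hh0 : h ≠ 0 := hh
  simp only [Pi.div_apply, slope_def_field]
  simp only [mul_zero, Real.exp_zero, neg_zero, sub_zero]
  rw [div_div_div_cancel_right₀ hh0]
  ring_nf

lemma tendsto_gG {L : ℝ} (hs : (∑ i, f i) < 0) (hL : 0 < L) :
    Tendsto (fun m : ℕ => gG f (L / 2 ^ m) (2 ^ m)) atTop
      (nhds (1 + (∑ i, max (f i) 0) / (∑ i, f i) * (Real.exp ((∑ i, f i) * L) - 1))) := by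
  set s := ∑ i, f i
  set c := ∑ i, max (f i) 0
  have hKh : ∀ m : ℕ, ((2 ^ m : ℕ) : ℝ) * (L / 2 ^ m) = L := by
    intro m
    have : ((2:ℝ) ^ m) ≠ 0 := by positivity
    push_cast
    field_simp
  have heq : ∀ m : ℕ, gG f (L / 2 ^ m) (2 ^ m)
      = 1 + (1 - Real.exp (-(c * (L / 2 ^ m)))) / (Real.exp (s * (L / 2 ^ m)) - 1)
        * Real.exp (s * (L / 2 ^ m)) * (Real.exp (s * L) - 1) := by
    intro m
    rw [gG_closed f hs (by positivity)]
    rw [hKh m]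
  simp_rw [heq]
  have hh0 : Tendsto (fun m : ℕ => L / 2 ^ m) atTop (nhdsWithin 0 {(0:ℝ)}ᶜ) := by
    apply tendsto_nhdsWithin_of_tendsto_nhds_of_eventually_within
    · have h1 : Tendsto (fun m : ℕ => L * (1 / 2 : ℝ) ^ m) atTop (nhds (L * 0)) :=
        (tendsto_pow_atTop_nhds_zero_of_lt_one (by norm_num) (by norm_num)).const_mul L
      rw [mul_zero] at h1
      apply h1.congr
      intro m
      rw [div_pow, one_pow]
      ring
    · filter_upwards with m
      have : (0:ℝ) < L / 2 ^ m := by positivity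
      exact ne_of_gt this
  have hQ := (tendsto_Q f hs).comp hh0
  have hE : Tendsto (fun m : ℕ => Real.exp (s * (L / 2 ^ m))) atTop (nhds 1) := by
    have hcont : Tendsto (fun u : ℝ => Real.exp (s * u)) (nhds 0) (nhds 1) := by
      have hc : Continuous fun u : ℝ => Real.exp (s * u) := by fun_prop
      have := hc.tendsto 0
      simpa using this
    exact hcont.comp (hh0.mono_right nhdsWithin_le_nhds)
  have := ((hQ.mul hE).mul (tendsto_const_nhds :
      Tendsto (fun _ : ℕ => Real.exp (s * L) - 1) atTop _)).const_add (1:ℝ)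
  simpa using this

lemma nuM_SL (hs : (∑ i, f i) < 0) {L : ℝ} (hL : 0 < L) :
    nuM d {x : Fin d → ℝ | ∃ t ∈ Icc (0 : ℝ) L, ∀ i, x i < f i * t}
      = ENNReal.ofReal
        (1 + (∑ i, max (f i) 0) / (∑ i, f i) * (Real.exp ((∑ i, f i) * L) - 1)) := by
  rw [← iUnion_UU f hL]
  have h1 : Tendsto (fun m : ℕ => nuM d (UU f L m)) atTop (nhds (nuM d (⋃ m, UU f L m))) :=
    tendsto_measure_iUnion_atTop (UU_mono f)
  have h2 : (fun m : ℕ => nuM d (UU f L m))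
      = fun m : ℕ => ENNReal.ofReal (gG f (L / 2 ^ m) (2 ^ m)) := by
    funext m
    rw [UU]
    exact nuM_union_formula f (by positivity) (2 ^ m)
  rw [h2] at h1
  have h3 : Tendsto (fun m : ℕ => ENNReal.ofReal (gG f (L / 2 ^ m) (2 ^ m))) atTop
      (nhds (ENNReal.ofReal
        (1 + (∑ i, max (f i) 0) / (∑ i, f i) * (Real.exp ((∑ i, f i) * L) - 1)))) :=
    (ENNReal.continuous_ofReal.tendsto _).comp (tendsto_gG f hs hL)
  exact tendsto_nhds_unique h1 h3

lemma integral_SL (hs : (∑ i, f i) < 0) {L : ℝ} (hL : 0 < L) :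
    (∫ x : Fin d → ℝ,
        Set.indicator {x : Fin d → ℝ | ∃ t ∈ Icc (0 : ℝ) L, ∀ i, x i < f i * t}
          (fun x => Real.exp (∑ i, x i)) x)
      = 1 + (∑ i, max (f i) 0) / (∑ i, f i) * (Real.exp ((∑ i, f i) * L) - 1) := by
  have hmeas : MeasurableSet {x : Fin d → ℝ | ∃ t ∈ Icc (0 : ℝ) L, ∀ i, x i < f i * t} := by
    rw [← iUnion_UU f hL]
    exact MeasurableSet.iUnion fun m => measurableSet_UU f L m
  have hcont : Continuous fun x : Fin d → ℝ => Real.exp (∑ i, x i) := by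
    apply Real.continuous_exp.comp
    exact continuous_finset_sum _ fun i _ => continuous_apply i
  rw [integral_indicator hmeas]
  rw [MeasureTheory.integral_eq_lintegral_of_nonneg_ae
    (Filter.Eventually.of_forall fun x => (Real.exp_pos _).le)
    (hcont.aestronglyMeasurable.restrict)]
  have : (∫⁻ x : Fin d → ℝ in {x : Fin d → ℝ | ∃ t ∈ Icc (0 : ℝ) L, ∀ i, x i < f i * t},
      ENNReal.ofReal (Real.exp (∑ i, x i)))
      = nuM d {x : Fin d → ℝ | ∃ t ∈ Icc (0 : ℝ) L, ∀ i, x i < f i * t} := by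
    rw [nuM, withDensity_apply _ hmeas]
  rw [this, nuM_SL f hs hL, ENNReal.toReal_ofReal]
  have hc : (0:ℝ) ≤ ∑ i, max (f i) 0 := c_nonneg f
  have hcs : (∑ i, max (f i) 0) / (∑ i, f i) ≤ 0 :=
    div_nonpos_of_nonneg_of_nonpos hc hs.le
  have hE : Real.exp ((∑ i, f i) * L) < 1 := Real.exp_lt_one_iff.2 (by nlinarith)
  nlinarith [mul_nonneg (neg_nonneg.2 hcs) (by linarith : (0:ℝ) ≤ 1 - Real.exp ((∑ i, f i) * L))]

end Stmt9Aux

/-- For `f ∈ ℝ^d` with `Σ_i f_i < 0`, the integral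
`I(L) = ∫_{ℝ^d} 1{∃ t ∈ [0,L] : x < f t} e^{Σ_i x_i} dx` converges, as `L → ∞`,
to `(Σ_i f_i⁻)/(Σ_i f_i)`. -/
theorem stmt9 {d : ℕ} (f : Fin d → ℝ) (hf : (∑ i, f i) < 0) :
    Tendsto (fun L : ℝ =>
      ∫ x : Fin d → ℝ,
        Set.indicator {x : Fin d → ℝ | ∃ t ∈ Icc (0 : ℝ) L, ∀ i, x i < f i * t}
          (fun x => Real.exp (∑ i, x i)) x)
      atTop (nhds ((∑ i, min (f i) 0) / (∑ i, f i))) := by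
  have hs0 : (∑ i, f i) ≠ 0 := ne_of_lt hf
  have hmm : (∑ i, min (f i) 0) + (∑ i, max (f i) 0) = ∑ i, f i := by
    rw [← Finset.sum_add_distrib]
    exact Finset.sum_congr rfl fun i _ => by rw [min_add_max, add_zero]
  have hT : Tendsto (fun L : ℝ =>
      1 + (∑ i, max (f i) 0) / (∑ i, f i) * (Real.exp ((∑ i, f i) * L) - 1)) atTop
      (nhds ((∑ i, min (f i) 0) / (∑ i, f i))) := by
    have h1 : Tendsto (fun L : ℝ => (∑ i, f i) * L) atTop atBot :=
      (tendsto_const_mul_atBot_of_neg hf).2 tendsto_id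
    have h2 : Tendsto (fun L : ℝ => Real.exp ((∑ i, f i) * L)) atTop (nhds 0) :=
      Real.tendsto_exp_atBot.comp h1
    have h3 := (((h2.sub_const 1).const_mul ((∑ i, max (f i) 0) / (∑ i, f i))).const_add
      (1:ℝ))
    have hval : 1 + (∑ i, max (f i) 0) / (∑ i, f i) * ((0:ℝ) - 1)
        = (∑ i, min (f i) 0) / (∑ i, f i) := by
      field_simp
      linarith [hmm]
    rw [hval] at h3
    exact h3
  apply hT.congr'
  filter_upwards [eventually_gt_atTop (0:ℝ)] with L hL
  exact (integral_SL f hf hL).symm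
end

section
/- Under condition B0 (each v_i is C¹, strictly increasing, with v_i(0) = 0) and A nonsingular, there exist τ̄ ∈ (0,T) and λ* > 0 such that for all t ∈ [τ̄, T] and all i ∈ I_T one has λ_i(t) > λ*; in particular I_T ⊆ I_t for all t ∈ [τ̄, T]. -/
open Matrix Set Filter Topology

/-- Lemma 4.8 (i)-(ii) of the paper. Under B0 and `A` nonsingular,
there exist `τ̄ ∈ (0,T)` and `λ* > 0` such that `λ_i(t) > λ*` for all `t ∈ [τ̄, T]` and
all `i ∈ I_T`; in particular `I_T ⊆ I_t` for all `t ∈ [τ̄, T]`. -/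
theorem stmt10 {d : ℕ} (T : ℝ) (hT : 0 < T)
    (v : Fin d → ℝ → ℝ)
    (hv_C1 : ∀ i, ContDiffOn ℝ 1 (v i) (Icc 0 T))
    (hv_mono : ∀ i, StrictMonoOn (v i) (Icc 0 T))
    (hv_0 : ∀ i, v i 0 = 0)
    (A : Matrix (Fin d) (Fin d) ℝ) (hA : IsUnit A.det)
    (a : Fin d → ℝ) (ha : ∃ i, 0 < a i)
    (Sg : ℝ → Matrix (Fin d) (Fin d) ℝ)
    (hSg : ∀ t, Sg t = A * Matrix.diagonal (fun i => v i t) * Aᵀ)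
    (ta : ℝ → Fin d → ℝ)
    (hta : ∀ t ∈ Ioc (0 : ℝ) T, (∀ i, a i ≤ ta t i) ∧
      ∀ y : Fin d → ℝ, (∀ i, a i ≤ y i) →
        ta t ⬝ᵥ (Sg t)⁻¹ *ᵥ ta t ≤ y ⬝ᵥ (Sg t)⁻¹ *ᵥ y)
    (lam : ℝ → Fin d → ℝ) (hlam : ∀ t, lam t = (Sg t)⁻¹ *ᵥ ta t) :
    ∃ τ ∈ Ioo (0 : ℝ) T, ∃ lamstar > (0 : ℝ),
      (∀ t ∈ Icc τ T, ∀ i, 0 < lam T i → lamstar < lam t i) ∧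
      (∀ t ∈ Icc τ T, ∀ i, 0 < lam T i → 0 < lam t i) := by
  classical
  have hT2 : (0 : ℝ) < T / 2 := by positivity
  have hIccIoc : Icc (T / 2) T ⊆ Ioc 0 T := fun t ht => ⟨lt_of_lt_of_le hT2 ht.1, ht.2⟩
  have hIccIcc : Icc (T / 2) T ⊆ Icc 0 T := fun t ht => ⟨(hT2.trans_le ht.1).le, ht.2⟩
  have hTmem : T ∈ Icc (0 : ℝ) T := ⟨hT.le, le_rfl⟩
  have hTIoc : T ∈ Ioc (0 : ℝ) T := ⟨hT, le_rfl⟩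
  have hv_pos : ∀ i, ∀ t ∈ Ioc (0 : ℝ) T, 0 < v i t := by
    intro i t ht
    have := hv_mono i (left_mem_Icc.mpr hT.le) ⟨ht.1.le, ht.2⟩ ht.1
    rwa [hv_0 i] at this
  have hv_le : ∀ i, ∀ s ∈ Icc (0:ℝ) T, ∀ t ∈ Icc (0:ℝ) T, s ≤ t → v i s ≤ v i t := by
    intro i s hs t ht hst
    rcases eq_or_lt_of_le hst with rfl | h
    · exact le_rfl
    · exact (hv_mono i hs ht h).le
  set C := A⁻¹ with hC
  have hCA : C * A = 1 := A.nonsing_inv_mul hA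
  have hAC : A * C = 1 := A.mul_nonsing_inv hA
  -- the quadratic form in diagonalized coordinates
  set Q : ℝ → (Fin d → ℝ) → ℝ := fun t x => ∑ i, (v i t)⁻¹ * ((C *ᵥ x) i) ^ 2 with hQ
  -- representation of the inverse matrix
  have hBrep : ∀ t ∈ Ioc (0 : ℝ) T,
      (Sg t)⁻¹ = Cᵀ * Matrix.diagonal (fun i => (v i t)⁻¹) * C := by
    intro t ht
    rw [hSg t]
    apply Matrix.inv_eq_right_inv
    have h1 : Aᵀ * Cᵀ = 1 := by rw [← Matrix.transpose_mul, hCA, Matrix.transpose_one]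
    calc A * Matrix.diagonal (fun i => v i t) * Aᵀ *
          (Cᵀ * Matrix.diagonal (fun i => (v i t)⁻¹) * C)
        = A * (Matrix.diagonal (fun i => v i t) *
            ((Aᵀ * Cᵀ) * (Matrix.diagonal (fun i => (v i t)⁻¹) * C))) := by
          simp only [Matrix.mul_assoc]
      _ = A * ((Matrix.diagonal (fun i => v i t) *
            Matrix.diagonal (fun i => (v i t)⁻¹)) * C) := by
          rw [h1, Matrix.one_mul, Matrix.mul_assoc]
      _ = 1 := by
          rw [Matrix.diagonal_mul_diagonal]
          have : (fun i => v i t * (v i t)⁻¹) = fun _ => (1:ℝ) := by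
            funext i; exact mul_inv_cancel₀ (hv_pos i t ht).ne'
          rw [this, Matrix.diagonal_one, Matrix.one_mul, hAC]
  -- quadratic form representation
  have hqrep : ∀ t ∈ Ioc (0 : ℝ) T, ∀ x : Fin d → ℝ,
      x ⬝ᵥ (Sg t)⁻¹ *ᵥ x = Q t x := by
    intro t ht x
    rw [hBrep t ht, Matrix.mul_assoc, ← Matrix.mulVec_mulVec, ← Matrix.mulVec_mulVec,
      Matrix.dotProduct_mulVec, Matrix.vecMul_transpose]
    simp only [hQ, dotProduct, Matrix.mulVec_diagonal]
    exact Finset.sum_congr rfl fun i _ => by ring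
  -- lambda representation
  have hlamrep : ∀ t ∈ Ioc (0 : ℝ) T, ∀ i,
      lam t i = ∑ j, C j i * ((v j t)⁻¹ * (C *ᵥ ta t) j) := by
    intro t ht i
    rw [hlam t, hBrep t ht, Matrix.mul_assoc, ← Matrix.mulVec_mulVec, ← Matrix.mulVec_mulVec]
    rw [show (Cᵀ *ᵥ (Matrix.diagonal (fun i => (v i t)⁻¹) *ᵥ (C *ᵥ ta t))) i
        = ∑ j, Cᵀ i j * (Matrix.diagonal (fun i => (v i t)⁻¹) *ᵥ (C *ᵥ ta t)) j from rfl]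
    simp only [Matrix.mulVec_diagonal, Matrix.transpose_apply]
  -- the feasible point y0
  set y0 : Fin d → ℝ := fun i => max (a i) 0 with hy0def
  have hy0 : ∀ i, a i ≤ y0 i := fun i => le_max_left _ _
  have hvhalf : ∀ i, 0 < v i (T / 2) := fun i => hv_pos i _ ⟨hT2, half_le_self hT.le⟩
  set K : ℝ := ∑ i, (v i (T / 2))⁻¹ * ((C *ᵥ y0) i) ^ 2 with hK
  have hKnonneg : 0 ≤ K := Finset.sum_nonneg fun i _ =>
    mul_nonneg (inv_nonneg.mpr (hvhalf i).le) (sq_nonneg _)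
  -- key bound on the coordinates of `C *ᵥ ta t`
  have hbound : ∀ t ∈ Icc (T / 2) T, ∀ i, ((C *ᵥ ta t) i) ^ 2 ≤ K * v i T := by
    intro t ht i
    have htIoc := hIccIoc ht
    have hvt : ∀ j, 0 < v j t := fun j => hv_pos j t htIoc
    have hvT : ∀ j, 0 < v j T := fun j => hv_pos j T hTIoc
    have h1 : (v i T)⁻¹ * ((C *ᵥ ta t) i) ^ 2 ≤ Q T (ta t) := by
      exact Finset.single_le_sum (f := fun j => (v j T)⁻¹ * ((C *ᵥ ta t) j) ^ 2)
        (fun j _ => mul_nonneg (inv_nonneg.mpr (hvT j).le) (sq_nonneg _)) (Finset.mem_univ i)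
    have h2 : Q T (ta t) ≤ Q t (ta t) := by
      apply Finset.sum_le_sum
      intro j _
      have : (v j T)⁻¹ ≤ (v j t)⁻¹ :=
        inv_anti₀ (hvt j) (hv_le j t (hIccIcc ht) T hTmem ht.2)
      exact mul_le_mul_of_nonneg_right this (by positivity)
    have h3 : Q t (ta t) ≤ Q t y0 := by
      rw [← hqrep t htIoc, ← hqrep t htIoc]
      exact (hta t htIoc).2 y0 hy0
    have h4 : Q t y0 ≤ K := by
      apply Finset.sum_le_sum
      intro j _
      have : (v j t)⁻¹ ≤ (v j (T / 2))⁻¹ :=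
        inv_anti₀ (hvhalf j) (hv_le j (T/2) ⟨hT2.le, half_le_self hT.le⟩ t (hIccIcc ht) ht.1)
      exact mul_le_mul_of_nonneg_right this (by positivity)
    have h5 : (v i T)⁻¹ * ((C *ᵥ ta t) i) ^ 2 ≤ K := le_trans h1 (le_trans h2 (le_trans h3 h4))
    calc ((C *ᵥ ta t) i) ^ 2 = v i T * ((v i T)⁻¹ * ((C *ᵥ ta t) i) ^ 2) := by
          rw [← mul_assoc, mul_inv_cancel₀ (hvT i).ne', one_mul]
      _ ≤ v i T * K := mul_le_mul_of_nonneg_left h5 (hvT i).le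
      _ = K * v i T := mul_comm _ _
  -- uniform bound on `ta t`
  set Rb : ℝ := ∑ j : Fin d, ∑ i : Fin d, |A j i| * Real.sqrt (K * v i T) with hRb
  have hRbnonneg : 0 ≤ Rb :=
    Finset.sum_nonneg fun j _ => Finset.sum_nonneg fun i _ => by positivity
  have htaBall : ∀ t ∈ Icc (T / 2) T, ta t ∈ Metric.closedBall (0 : Fin d → ℝ) Rb := by
    intro t ht
    rw [Metric.mem_closedBall, dist_zero_right, pi_norm_le_iff_of_nonneg hRbnonneg]
    intro j
    have hta_eq : ta t = A *ᵥ (C *ᵥ ta t) := by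
      rw [Matrix.mulVec_mulVec, hAC, Matrix.one_mulVec]
    have habs : |ta t j| ≤ ∑ i, |A j i| * Real.sqrt (K * v i T) := by
      conv_lhs => rw [hta_eq]
      rw [show (A *ᵥ (C *ᵥ ta t)) j = ∑ i, A j i * (C *ᵥ ta t) i from rfl]
      refine le_trans (Finset.abs_sum_le_sum_abs _ _) ?_
      apply Finset.sum_le_sum
      intro i _
      rw [abs_mul]
      refine mul_le_mul_of_nonneg_left ?_ (abs_nonneg _)
      have h2 := hbound t ht i
      calc |(C *ᵥ ta t) i| = Real.sqrt (((C *ᵥ ta t) i) ^ 2) := (Real.sqrt_sq_eq_abs _).symm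
        _ ≤ Real.sqrt (K * v i T) := Real.sqrt_le_sqrt h2
    refine le_trans habs ?_
    exact Finset.single_le_sum (f := fun j => ∑ i, |A j i| * Real.sqrt (K * v i T))
      (fun j _ => Finset.sum_nonneg fun i _ => by positivity) (Finset.mem_univ j)
  -- the filter
  set l : Filter ℝ := nhdsWithin T (Icc (T / 2) T) with hl
  have hvTl : ∀ i, Tendsto (v i) l (𝓝 (v i T)) := by
    intro i
    exact ((hv_C1 i).continuousOn.continuousWithinAt hTmem).mono hIccIcc
  have hvTne : ∀ i, v i T ≠ 0 := fun i => (hv_pos i T hTIoc).ne'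
  -- uniqueness of the minimizer at time T
  have huniq : ∀ z : Fin d → ℝ, (∀ i, a i ≤ z i) → Q T z ≤ Q T (ta T) → z = ta T := by
    intro z hzfeas hzle
    have hTfeas := (hta T hTIoc).1
    have hTopt : ∀ y : Fin d → ℝ, (∀ i, a i ≤ y i) → Q T (ta T) ≤ Q T y := by
      intro y hy
      rw [← hqrep T hTIoc, ← hqrep T hTIoc]
      exact (hta T hTIoc).2 y hy
    set m : Fin d → ℝ := fun i => (z i + ta T i) / 2 with hmdef
    have hmfeas : ∀ i, a i ≤ m i := by
      intro i
      have := add_le_add (hzfeas i) (hTfeas i)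
      simp only [hmdef]
      linarith
    have hm : Q T (ta T) ≤ Q T m := hTopt m hmfeas
    have hCm : ∀ i, (C *ᵥ m) i = ((C *ᵥ z) i + (C *ᵥ ta T) i) / 2 := by
      intro i
      have : m = (2:ℝ)⁻¹ • (z + ta T) := by
        funext i; simp [hmdef]; ring
      rw [this, Matrix.mulVec_smul, Matrix.mulVec_add]
      simp [Pi.smul_apply]
      ring
    have hsum : Q T m + ∑ i, (v i T)⁻¹ * (((C *ᵥ z) i - (C *ᵥ ta T) i) / 2) ^ 2
        = (Q T z + Q T (ta T)) / 2 := by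
      simp only [hQ]
      rw [← Finset.sum_add_distrib, ← Finset.sum_add_distrib, Finset.sum_div]
      refine Finset.sum_congr rfl fun i _ => ?_
      rw [hCm i]
      ring
    have hS0 : ∑ i, (v i T)⁻¹ * (((C *ᵥ z) i - (C *ᵥ ta T) i) / 2) ^ 2 ≤ 0 := by
      have := hTopt z hzfeas
      linarith
    have hSz : ∑ i, (v i T)⁻¹ * (((C *ᵥ z) i - (C *ᵥ ta T) i) / 2) ^ 2 = 0 :=
      le_antisymm hS0 (Finset.sum_nonneg fun i _ => by
        have := (hv_pos i T hTIoc); positivity)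
    have hterm : ∀ i ∈ Finset.univ,
        (v i T)⁻¹ * (((C *ᵥ z) i - (C *ᵥ ta T) i) / 2) ^ 2 = 0 := by
      rw [← Finset.sum_eq_zero_iff_of_nonneg (fun i _ => by
        have := (hv_pos i T hTIoc); positivity)]
      exact hSz
    have hCzT : C *ᵥ z = C *ᵥ ta T := by
      funext i
      have h := hterm i (Finset.mem_univ i)
      have hvi : (v i T)⁻¹ ≠ 0 := inv_ne_zero (hvTne i)
      have : (((C *ᵥ z) i - (C *ᵥ ta T) i) / 2) ^ 2 = 0 := by
        rcases mul_eq_zero.mp h with h' | h'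
        · exact absurd h' hvi
        · exact h'
      have := pow_eq_zero_iff (n := 2) (by norm_num) |>.mp this
      linarith [this]
    calc z = 1 *ᵥ z := (Matrix.one_mulVec z).symm
      _ = A *ᵥ (C *ᵥ z) := by rw [Matrix.mulVec_mulVec, hAC]
      _ = A *ᵥ (C *ᵥ ta T) := by rw [hCzT]
      _ = 1 *ᵥ ta T := by rw [Matrix.mulVec_mulVec, hAC]
      _ = ta T := Matrix.one_mulVec _
  -- continuity of `ta` at `T`
  have hta_tendsto : Tendsto ta l (𝓝 (ta T)) := by
    apply tendsto_of_subseq_tendsto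
    intro ns hns
    have hmem : ∀ᶠ n in atTop, ns n ∈ Icc (T / 2) T := hns.eventually eventually_mem_nhdsWithin
    have hfreq : ∃ᶠ n in atTop, ta (ns n) ∈ Metric.closedBall (0 : Fin d → ℝ) Rb :=
      (hmem.mono fun n hn => htaBall _ hn).frequently
    obtain ⟨z, _, φ, hφ, hconv⟩ :=
      tendsto_subseq_of_frequently_bounded Metric.isBounded_closedBall hfreq
    refine ⟨φ, ?_⟩
    suffices hz : z = ta T by rw [← hz]; exact hconv
    set sn : ℕ → ℝ := fun n => ns (φ n) with hsn_def
    have hsn : Tendsto sn atTop l := hns.comp hφ.tendsto_atTop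
    have hsnm : ∀ᶠ n in atTop, sn n ∈ Icc (T / 2) T := hsn.eventually eventually_mem_nhdsWithin
    have hcomp : ∀ j, Tendsto (fun n => ta (sn n) j) atTop (𝓝 (z j)) := fun j =>
      tendsto_pi_nhds.mp hconv j
    have hCcomp : ∀ i, Tendsto (fun n => (C *ᵥ ta (sn n)) i) atTop (𝓝 ((C *ᵥ z) i)) := by
      intro i
      simp only [Matrix.mulVec, dotProduct]
      exact tendsto_finset_sum _ fun j _ => tendsto_const_nhds.mul (hcomp j)
    have hvs : ∀ i, Tendsto (fun n => v i (sn n)) atTop (𝓝 (v i T)) := fun i =>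
      (hvTl i).comp hsn
    have hQz : Tendsto (fun n => Q (sn n) (ta (sn n))) atTop (𝓝 (Q T z)) := by
      apply tendsto_finset_sum
      intro i _
      exact (((hvs i).inv₀ (hvTne i)).mul ((hCcomp i).pow 2))
    have hQy : ∀ y : Fin d → ℝ, Tendsto (fun n => Q (sn n) y) atTop (𝓝 (Q T y)) := by
      intro y
      apply tendsto_finset_sum
      intro i _
      exact ((hvs i).inv₀ (hvTne i)).mul tendsto_const_nhds
    have hzfeas : ∀ i, a i ≤ z i := by
      intro i
      refine ge_of_tendsto (hcomp i) ?_
      exact hsnm.mono fun n hn => (hta _ (hIccIoc hn)).1 i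
    have hzopt : Q T z ≤ Q T (ta T) := by
      refine le_of_tendsto_of_tendsto hQz (hQy (ta T)) ?_
      refine hsnm.mono fun n hn => ?_
      have hnIoc := hIccIoc hn
      show Q (sn n) (ta (sn n)) ≤ Q (sn n) (ta T)
      rw [← hqrep _ hnIoc, ← hqrep _ hnIoc]
      exact (hta _ hnIoc).2 (ta T) (hta T hTIoc).1
    exact huniq z hzfeas hzopt
  -- continuity of each `lam · i` at `T`
  have hlamT : ∀ i, Tendsto (fun t => lam t i) l (𝓝 (lam T i)) := by
    intro i
    have hcompl : ∀ j, Tendsto (fun t => ta t j) l (𝓝 (ta T j)) := fun j =>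
      tendsto_pi_nhds.mp hta_tendsto j
    have hCcompl : ∀ j, Tendsto (fun t => (C *ᵥ ta t) j) l (𝓝 ((C *ᵥ ta T) j)) := by
      intro j
      simp only [Matrix.mulVec, dotProduct]
      exact tendsto_finset_sum _ fun k _ => tendsto_const_nhds.mul (hcompl k)
    have hmain : Tendsto (fun t => ∑ j, C j i * ((v j t)⁻¹ * (C *ᵥ ta t) j)) l
        (𝓝 (∑ j, C j i * ((v j T)⁻¹ * (C *ᵥ ta T) j))) := by
      apply tendsto_finset_sum
      intro j _
      exact tendsto_const_nhds.mul (((hvTl j).inv₀ (hvTne j)).mul (hCcompl j))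
    rw [hlamrep T hTIoc i]
    refine Tendsto.congr' ?_ hmain
    filter_upwards [eventually_mem_nhdsWithin] with t ht
    exact (hlamrep t (hIccIoc ht) i).symm
  -- final assembly
  by_cases hS : ∃ i, 0 < lam T i
  · set S : Finset (Fin d) := Finset.univ.filter (fun i => 0 < lam T i) with hSdef
    have hSne : S.Nonempty := by
      obtain ⟨i, hi⟩ := hS
      exact ⟨i, by simp [hSdef, hi]⟩
    set m : ℝ := S.inf' hSne (lam T) with hmdef
    have hmpos : 0 < m := by
      rw [hmdef, Finset.lt_inf'_iff]
      intro i hi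
      exact (Finset.mem_filter.mp hi).2
    have hev : ∀ᶠ t in l, ∀ i ∈ S, m / 2 < lam t i := by
      rw [eventually_all_finset]
      intro i hi
      have hle : m ≤ lam T i := Finset.inf'_le _ hi
      exact (hlamT i).eventually_const_lt (by linarith)
    rw [hl, eventually_nhdsWithin_iff, Metric.eventually_nhds_iff] at hev
    obtain ⟨δ, hδ, hδP⟩ := hev
    refine ⟨max (T / 2) (T - δ / 2), ⟨lt_of_lt_of_le hT2 (le_max_left _ _),
      max_lt (half_lt_self hT) (by linarith)⟩, m / 2, by linarith, ?_, ?_⟩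
    · intro t ht i hi
      have ht1 : T / 2 ≤ t := le_trans (le_max_left _ _) ht.1
      have ht2 : T - δ / 2 ≤ t := le_trans (le_max_right _ _) ht.1
      have hdist : dist t T < δ := by
        rw [Real.dist_eq, abs_sub_lt_iff]
        constructor <;> linarith [ht.2]
      exact hδP hdist ⟨ht1, ht.2⟩ i (by simp [hSdef, hi])
    · intro t ht i hi
      have ht1 : T / 2 ≤ t := le_trans (le_max_left _ _) ht.1
      have ht2 : T - δ / 2 ≤ t := le_trans (le_max_right _ _) ht.1
      have hdist : dist t T < δ := by
        rw [Real.dist_eq, abs_sub_lt_iff]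
        constructor <;> linarith [ht.2]
      have := hδP hdist ⟨ht1, ht.2⟩ i (by simp [hSdef, hi])
      linarith
  · push_neg at hS
    refine ⟨T / 2, ⟨hT2, half_lt_self hT⟩, 1, one_pos, ?_, ?_⟩ <;>
      · intro t _ i hi
        exact absurd hi (not_lt.mpr (hS i))
end

section
/- Let T > 0 and let v : [0,T] → ℝ be convex and nondecreasing with v(0) = 0. Then for all s, t ∈ [0,T]: (v(s) + v(t) − v(|s − t|))/2 ≥ min(v(s), v(t)). -/
open Set

lemma stmt12_superadd (T : ℝ) (v : ℝ → ℝ)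
    (hconv : ConvexOn ℝ (Icc 0 T) v) (h0 : v 0 = 0)
    {x y : ℝ} (hx : 0 ≤ x) (hy : 0 ≤ y) (hxy : x + y ≤ T) :
    v x + v y ≤ v (x + y) := by
  rcases eq_or_lt_of_le (by positivity : (0:ℝ) ≤ x + y) with hc | hc
  · have hx0 : x = 0 := by linarith
    have hy0 : y = 0 := by linarith
    simp [hx0, hy0, h0]
  · set c := x + y with hcdef
    have h0mem : (0:ℝ) ∈ Icc 0 T := ⟨le_refl _, by linarith⟩
    have hcmem : c ∈ Icc 0 T := ⟨le_of_lt hc, hxy⟩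
    have hvx : v x ≤ (x / c) * v c := by
      have := hconv.2 h0mem hcmem (show (0:ℝ) ≤ y / c by positivity)
        (show (0:ℝ) ≤ x / c by positivity) (by field_simp <;> linarith)
      simp only [smul_eq_mul, mul_zero, zero_add, h0] at this
      have hxc : x / c * c = x := by field_simp
      rw [hxc] at this
      linarith
    have hvy : v y ≤ (y / c) * v c := by
      have := hconv.2 h0mem hcmem (show (0:ℝ) ≤ x / c by positivity)
        (show (0:ℝ) ≤ y / c by positivity) (by field_simp <;> linarith)
      simp only [smul_eq_mul, mul_zero, zero_add, h0] at this
      have hyc : y / c * c = y := by field_simp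
      rw [hyc] at this
      linarith
    have : (x / c) * v c + (y / c) * v c = v c := by
      field_simp
      ring
    linarith

/-- Let `v : [0,T] → ℝ` be convex and nondecreasing with `v(0) = 0`.
Then for all `s, t ∈ [0,T]`: `(v(s) + v(t) - v(|s-t|))/2 ≥ min(v(s), v(t))`. -/
theorem stmt12 (T : ℝ) (hT : 0 < T) (v : ℝ → ℝ)
    (hconv : ConvexOn ℝ (Icc 0 T) v)
    (hmono : MonotoneOn v (Icc 0 T))
    (h0 : v 0 = 0) :
    ∀ s ∈ Icc (0 : ℝ) T, ∀ t ∈ Icc (0 : ℝ) T,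
      min (v s) (v t) ≤ (v s + v t - v |s - t|) / 2 := by
  have key : ∀ s ∈ Icc (0 : ℝ) T, ∀ t ∈ Icc (0 : ℝ) T, s ≤ t →
      min (v s) (v t) ≤ (v s + v t - v |s - t|) / 2 := by
    intro s hs t ht hst
    have habs : |s - t| = t - s := by rw [abs_sub_comm]; exact abs_of_nonneg (by linarith)
    have hmin : min (v s) (v t) = v s := min_eq_left (hmono hs ht hst)
    have hsup : v s + v (t - s) ≤ v t := by
      have := stmt12_superadd T v hconv h0 hs.1 (by linarith : (0:ℝ) ≤ t - s)
        (by linarith [ht.2] : s + (t - s) ≤ T)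
      simpa using this
    rw [hmin, habs]
    linarith
  intro s hs t ht
  rcases le_total s t with h | h
  · exact key s hs t ht h
  · have := key t ht s hs h
    rw [min_comm, abs_sub_comm]
    linarith
end

section
/- Under conditions B0 (each v_i is C¹, strictly increasing, with v_i(0) = 0) and BI (v̇_i(T) > 0 for each i), and A nonsingular, set Q := diag(v̇₁(T)/v₁(T),…,v̇_d(T)/v_d(T)), λ := λ(T), ã := ã(T). Then the denominator Σ_{i=1}^d λ_i · (A Q A^{−1} ã)_i is strictly positive, so that the constant 𝒞 := ( Σ_{i=1}^d max(λ_i · (A Q A^{−1} ã)_i, 0) ) / ( Σ_{i=1}^d λ_i · (A Q A^{−1} ã)_i ) is well defined, and moreover 𝒞 ≥ 1. -/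
open Matrix Set

/-- Under B0, BI and `A` nonsingular, with `Q := diag(v̇_i(T)/v_i(T))`,
`λ := λ(T)`, `ã := ã(T)`, the sum `Σ_i λ_i (A Q A⁻¹ ã)_i` is strictly positive, so the
constant `𝒞 = (Σ_i max(λ_i (A Q A⁻¹ ã)_i, 0)) / (Σ_i λ_i (A Q A⁻¹ ã)_i)` is well defined,
and `𝒞 ≥ 1`. -/
theorem stmt14 {d : ℕ} (T : ℝ) (hT : 0 < T)
    (v : Fin d → ℝ → ℝ)
    (hv_C1 : ∀ i, ContDiffOn ℝ 1 (v i) (Icc 0 T))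
    (hv_mono : ∀ i, StrictMonoOn (v i) (Icc 0 T))
    (hv_0 : ∀ i, v i 0 = 0)
    (v' : Fin d → ℝ)
    (hv' : ∀ i, HasDerivWithinAt (v i) (v' i) (Icc 0 T) T)
    (hBI : ∀ i, 0 < v' i)
    (A : Matrix (Fin d) (Fin d) ℝ) (hA : IsUnit A.det)
    (a : Fin d → ℝ) (ha : ∃ i, 0 < a i)
    (Sg : ℝ → Matrix (Fin d) (Fin d) ℝ)
    (hSg : ∀ t, Sg t = A * Matrix.diagonal (fun i => v i t) * Aᵀ)
    (ta : ℝ → Fin d → ℝ)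
    (hta : ∀ t ∈ Ioc (0 : ℝ) T, (∀ i, a i ≤ ta t i) ∧
      ∀ y : Fin d → ℝ, (∀ i, a i ≤ y i) →
        ta t ⬝ᵥ (Sg t)⁻¹ *ᵥ ta t ≤ y ⬝ᵥ (Sg t)⁻¹ *ᵥ y)
    (lam : Fin d → ℝ) (hlam : lam = (Sg T)⁻¹ *ᵥ ta T)
    (Q : Matrix (Fin d) (Fin d) ℝ)
    (hQ : Q = Matrix.diagonal (fun i => v' i / v i T)) :
    0 < ∑ i, lam i * ((A * Q * A⁻¹) *ᵥ ta T) i ∧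
    1 ≤ (∑ i, max (lam i * ((A * Q * A⁻¹) *ᵥ ta T) i) 0) /
        (∑ i, lam i * ((A * Q * A⁻¹) *ᵥ ta T) i) := by
  have hvT : ∀ i, 0 < v i T := by
    intro i
    have h := hv_mono i ⟨le_rfl, hT.le⟩ ⟨hT.le, le_rfl⟩ hT
    simpa [hv_0 i] using h
  obtain ⟨hax, -⟩ := hta T ⟨hT, le_rfl⟩
  set x : Fin d → ℝ := ta T with hx
  set w : Fin d → ℝ := A⁻¹ *ᵥ x with hw
  set V' : Matrix (Fin d) (Fin d) ℝ := Matrix.diagonal (fun i => (v i T)⁻¹) with hV'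
  have hVinv : (Matrix.diagonal fun i => v i T)⁻¹ = V' := by
    apply Matrix.inv_eq_right_inv
    rw [hV', Matrix.diagonal_mul_diagonal]
    have : (fun i => v i T * (v i T)⁻¹) = fun _ => (1 : ℝ) :=
      funext fun i => mul_inv_cancel₀ (hvT i).ne'
    rw [this, Matrix.diagonal_one]
  have hlam2 : lam = (A⁻¹)ᵀ *ᵥ (V' *ᵥ w) := by
    rw [hlam, hSg, Matrix.mul_inv_rev, Matrix.mul_inv_rev, hVinv,
      ← Matrix.transpose_nonsing_inv, ← Matrix.mulVec_mulVec,
      ← Matrix.mulVec_mulVec, ← hw]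
  have hMx : (A * Q * A⁻¹) *ᵥ x = A *ᵥ (Q *ᵥ w) := by
    rw [Matrix.mul_assoc, ← Matrix.mulVec_mulVec, ← Matrix.mulVec_mulVec, ← hw]
  have key : ∀ u z : Fin d → ℝ, ((A⁻¹)ᵀ *ᵥ u) ⬝ᵥ (A *ᵥ z) = u ⬝ᵥ z := by
    intro u z
    rw [Matrix.mulVec_transpose, ← Matrix.dotProduct_mulVec, Matrix.mulVec_mulVec,
      Matrix.nonsing_inv_mul A hA, Matrix.one_mulVec]
  -- the key computation of the sum
  have hS : (∑ i, lam i * ((A * Q * A⁻¹) *ᵥ x) i)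
      = ∑ i, (v' i / (v i T) ^ 2) * (w i) ^ 2 := by
    have h1 : (∑ i, lam i * ((A * Q * A⁻¹) *ᵥ x) i)
        = lam ⬝ᵥ ((A * Q * A⁻¹) *ᵥ x) := rfl
    rw [h1, hlam2, hMx, key, dotProduct]
    refine Finset.sum_congr rfl fun i _ => ?_
    rw [hV', Matrix.mulVec_diagonal, hQ, Matrix.mulVec_diagonal]
    have := (hvT i).ne'
    field_simp
  -- w ≠ 0
  obtain ⟨i0, hi0⟩ := ha
  have hx0 : 0 < x i0 := lt_of_lt_of_le hi0 (hax i0)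
  have hwne : w ≠ 0 := by
    intro h
    have hxw : x = A *ᵥ w := by
      rw [hw, Matrix.mulVec_mulVec, Matrix.mul_nonsing_inv A hA, Matrix.one_mulVec]
    rw [h, Matrix.mulVec_zero] at hxw
    exact absurd (congrFun hxw i0) hx0.ne'
  obtain ⟨j, hj⟩ := Function.ne_iff.mp hwne
  have hj' : w j ≠ 0 := by simpa using hj
  have hpos : 0 < ∑ i, lam i * ((A * Q * A⁻¹) *ᵥ x) i := by
    rw [hS]
    refine Finset.sum_pos' (fun i _ => ?_) ⟨j, Finset.mem_univ j, ?_⟩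
    · exact mul_nonneg (le_of_lt (div_pos (hBI i) (pow_pos (hvT i) 2))) (sq_nonneg _)
    · exact mul_pos (div_pos (hBI j) (pow_pos (hvT j) 2))
        (lt_of_le_of_ne (sq_nonneg _) (Ne.symm (pow_ne_zero 2 hj')))
  refine ⟨hpos, ?_⟩
  rw [le_div_iff₀ hpos, one_mul]
  exact Finset.sum_le_sum fun i _ => le_max_left _ _
end

section
/- Let μ > 0, σ ∈ ℝ, and L > 0. Then for Y an exponentially distributed random variable with rate μ (density y ↦ μ e^{−μy} on [0,∞)): E[e^{σ·min(L,Y)}] = ∫₀^∞ e^{σ·min(L,y)} μ e^{−μy} dy equals μ·L + 1 when σ = μ, and equals (σ/(σ−μ))·e^{(σ−μ)L} − μ/(σ−μ) when σ ≠ μ. -/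
open MeasureTheory Set


lemma intA {b : ℝ} (hb : 0 < b) (c : ℝ) :
    ∫ x in Ioi c, Real.exp (-b * x) = Real.exp (-b * c) / b := by
  have h : ∀ x ∈ Ici c, HasDerivAt (fun x => -Real.exp (-b * x) / b) (Real.exp (-b * x)) x := by
    intro x _
    have : HasDerivAt (fun x => Real.exp (-b * x)) (Real.exp (-b * x) * (-b)) x :=
      (Real.hasDerivAt_exp _).comp x ((hasDerivAt_id x).const_mul (-b)) |>.congr_deriv (by simp only [id_eq]; ring)
    have := (this.neg).div_const b
    exact this.congr_deriv (by field_simp)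
  have hcont : ContinuousWithinAt (fun x => -Real.exp (-b * x) / b) (Ici c) c :=
    (Continuous.continuousWithinAt (by continuity))
  have htend : Filter.Tendsto (fun x => -Real.exp (-b * x) / b) Filter.atTop (nhds 0) := by
    have : Filter.Tendsto (fun x => Real.exp (-b * x)) Filter.atTop (nhds 0) := by
      simpa [neg_mul, Real.exp_neg, Pi.inv_def, Function.comp_def] using
        (Real.tendsto_exp_atTop.comp (Filter.tendsto_id.const_mul_atTop hb)).inv_tendsto_atTop
    simpa using (this.neg.div_const b)
  have := integral_Ioi_of_hasDerivAt_of_tendsto hcont (fun x hx => h x (mem_Ici.mpr (le_of_lt (mem_Ioi.mp hx))))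
    (exp_neg_integrableOn_Ioi c hb) htend
  rw [this]; ring

lemma intB {c : ℝ} (hc : c ≠ 0) (L : ℝ) :
    ∫ x in (0:ℝ)..L, Real.exp (c * x) = (Real.exp (c * L) - 1) / c := by
  have h : ∀ x ∈ uIcc (0:ℝ) L, HasDerivAt (fun x => Real.exp (c * x) / c) (Real.exp (c * x)) x := by
    intro x _
    have : HasDerivAt (fun x => Real.exp (c * x)) (Real.exp (c * x) * c) x :=
      (Real.hasDerivAt_exp _).comp x ((hasDerivAt_id x).const_mul c) |>.congr_deriv (by simp only [id_eq]; ring)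
    have := this.div_const c
    exact this.congr_deriv (by field_simp)
  rw [intervalIntegral.integral_eq_sub_of_hasDerivAt h (by apply Continuous.intervalIntegrable; continuity)]
  simp [sub_div]


/-- For `Y ~ Exp(μ)` (density `μ e^{-μ y}` on `[0,∞)`), `σ ∈ ℝ` and
`L > 0`: `E[e^{σ min(L,Y)}] = ∫₀^∞ e^{σ min(L,y)} μ e^{-μ y} dy` equals `μ L + 1` when
`σ = μ`, and `(σ/(σ-μ)) e^{(σ-μ)L} - μ/(σ-μ)` when `σ ≠ μ`. -/
theorem stmt15 (μ σ L : ℝ) (hμ : 0 < μ) (hL : 0 < L) :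
    (σ = μ →
      (∫ y in Ioi (0 : ℝ), Real.exp (σ * min L y) * (μ * Real.exp (-μ * y)))
        = μ * L + 1) ∧
    (σ ≠ μ →
      (∫ y in Ioi (0 : ℝ), Real.exp (σ * min L y) * (μ * Real.exp (-μ * y)))
        = σ / (σ - μ) * Real.exp ((σ - μ) * L) - μ / (σ - μ)) := by
  set f : ℝ → ℝ := fun y => Real.exp (σ * min L y) * (μ * Real.exp (-μ * y)) with hf
  have hdisj : Disjoint (Ioc (0:ℝ) L) (Ioi L) := Ioc_disjoint_Ioi le_rfl
  have hunion : Ioc (0:ℝ) L ∪ Ioi L = Ioi 0 := Ioc_union_Ioi_eq_Ioi hL.le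
  have hf1 : ∀ y ∈ Ioc (0:ℝ) L, f y = μ * Real.exp ((σ - μ) * y) := by
    intro y hy
    simp only [hf, min_eq_right hy.2, ← Real.exp_add]
    rw [mul_comm, mul_assoc, ← Real.exp_add]
    ring_nf
  have hf2 : ∀ y ∈ Ioi L, f y = (Real.exp (σ * L) * μ) * Real.exp (-μ * y) := by
    intro y hy
    simp only [hf, min_eq_left (le_of_lt (mem_Ioi.mp hy))]
    ring
  have hi1 : IntegrableOn f (Ioc 0 L) := by
    apply Continuous.integrableOn_Ioc; fun_prop
  have hi2 : IntegrableOn f (Ioi L) := by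
    exact IntegrableOn.congr_fun ((exp_neg_integrableOn_Ioi L hμ).const_mul (Real.exp (σ * L) * μ))
      (fun y hy => (hf2 y hy).symm) measurableSet_Ioi
  have hsplit : (∫ y in Ioi (0:ℝ), f y) = (∫ y in Ioc (0:ℝ) L, f y) + ∫ y in Ioi L, f y := by
    rw [← hunion, setIntegral_union hdisj measurableSet_Ioi hi1 hi2]
  have e1 : (∫ y in Ioc (0:ℝ) L, f y) = μ * ∫ x in (0:ℝ)..L, Real.exp ((σ - μ) * x) := by
    rw [setIntegral_congr_fun measurableSet_Ioc hf1, intervalIntegral.integral_of_le hL.le,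
      ← integral_const_mul]
  have e2 : (∫ y in Ioi L, f y) = Real.exp ((σ - μ) * L) := by
    rw [setIntegral_congr_fun measurableSet_Ioi hf2, integral_const_mul, intA hμ]
    field_simp
    rw [← Real.exp_add]
    ring_nf
  constructor
  · intro h
    subst h
    rw [hsplit, e1, e2]
    simp
  · intro h
    have hc : σ - μ ≠ 0 := sub_ne_zero.mpr h
    rw [hsplit, e1, e2, intB hc]
    field_simp
    ring
end
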